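/- Let M_n^r = Ψ_n^r Λ^r (Ψ_n^r)^T where Λ^r = diag(λ_0,...,λ_{r-1}) and (Ψ_n^r)_{i,k} = ψ_k(X_i)/√n, and let u_i be the i-th column of Ψ_n^r. Set E = (Ψ_n^r)^T Ψ_n^r − Id_r, C = ‖E‖_op², and K = max_i |λ_i|. Then ‖M_n^r u_i − λ_i u_i‖₂² ≤ K²(√C + 1)·C. -/

import Mathlib

open Matrix

theorem stmt2 (n r : ℕ) (lam : Fin r → ℝ) (Ψ : Matrix (Fin n) (Fin r) ℝ) (K C : ℝ)
    (hK : ∀ i, |lam i| ≤ K)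
    (hC : C = ‖Matrix.toEuclideanCLM (𝕜 := ℝ) (n := Fin r) (Ψᵀ * Ψ - 1)‖ ^ 2)
    (i : Fin r) :
    ∑ j, ((Ψ * Matrix.diagonal lam * Ψᵀ).mulVec (fun j => Ψ j i) j
        - lam i * Ψ j i) ^ 2
      ≤ K ^ 2 * (Real.sqrt C + 1) * C := by
  set TE := Matrix.toEuclideanCLM (𝕜 := ℝ) (n := Fin r) (Ψᵀ * Ψ - 1) with hTE
  set e : Fin r → ℝ := Pi.single i 1 with he
  set w : Fin r → ℝ := (Ψᵀ * Ψ - 1) *ᵥ e with hw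
  set v : Fin r → ℝ := fun k => lam k * w k with hv
  set ι := (WithLp.equiv 2 (Fin r → ℝ)).symm with hι
  have hKnn : 0 ≤ K := le_trans (abs_nonneg _) (hK i)
  have hnormE : ‖TE‖ = Real.sqrt C := by
    rw [hC, Real.sqrt_sq (norm_nonneg _)]
  have hsqrtnn : 0 ≤ Real.sqrt C := Real.sqrt_nonneg _
  -- norms and inner products on EuclideanSpace as dot products
  have hinner : ∀ x y : Fin r → ℝ, (inner ℝ (ι x) (ι y) : ℝ) = x ⬝ᵥ y := by
    intro x y; simp [hι, PiLp.inner_apply, dotProduct, mul_comm]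
  have hnormsq : ∀ x : Fin r → ℝ, ‖ι x‖ ^ 2 = x ⬝ᵥ x := by
    intro x; rw [← real_inner_self_eq_norm_sq, hinner]
  have happly : ∀ x : Fin r → ℝ, TE (ι x) = ι ((Ψᵀ * Ψ - 1) *ᵥ x) := fun _ => rfl
  -- key vector identity
  have key : ∀ j, (Ψ * Matrix.diagonal lam * Ψᵀ).mulVec (fun j => Ψ j i) j
      - lam i * Ψ j i = (Ψ *ᵥ v) j := by
    have hu : (fun j => Ψ j i) = Ψ *ᵥ e := by
      funext j; simp [he, Matrix.mulVec_single]
    have hv2 : v = (Matrix.diagonal lam) *ᵥ w := by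
      funext k; simp [hv, Matrix.mulVec_diagonal]
    intro j
    rw [hu, hv2, Matrix.mulVec_mulVec, Matrix.mulVec_mulVec, hw, Matrix.mulVec_mulVec,
      Matrix.mul_sub, Matrix.mul_one, Matrix.sub_mulVec, Matrix.mul_assoc (Ψ * Matrix.diagonal lam)]
    have h5 : lam i * Ψ j i = ((Ψ * Matrix.diagonal lam) *ᵥ e) j := by
      simp [he, Matrix.mulVec_single, Matrix.mul_diagonal, mul_comm]
    rw [h5]
    simp [Matrix.mul_assoc]
  -- rewrite the sum
  have hLHS : ∑ j, ((Ψ * Matrix.diagonal lam * Ψᵀ).mulVec (fun j => Ψ j i) j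
      - lam i * Ψ j i) ^ 2 = v ⬝ᵥ v + v ⬝ᵥ ((Ψᵀ * Ψ - 1) *ᵥ v) := by
    have h1 : ∑ j, ((Ψ * Matrix.diagonal lam * Ψᵀ).mulVec (fun j => Ψ j i) j
        - lam i * Ψ j i) ^ 2 = (Ψ *ᵥ v) ⬝ᵥ (Ψ *ᵥ v) := by
      simp only [key]; simp [dotProduct, sq]
    have h2 : (Ψ *ᵥ v) ⬝ᵥ (Ψ *ᵥ v) = v ⬝ᵥ (Ψᵀ * Ψ) *ᵥ v := by
      rw [← Matrix.mulVec_mulVec, Matrix.mulVec_transpose, Matrix.dotProduct_mulVec,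
        dotProduct_comm]
    rw [h1, h2, Matrix.sub_mulVec, Matrix.one_mulVec, dotProduct_sub]; ring
  rw [hLHS]
  -- bound w ⬝ᵥ w ≤ C
  have hwbound : w ⬝ᵥ w ≤ C := by
    have h1 : ‖ι w‖ ≤ ‖TE‖ * ‖ι e‖ := by
      rw [hw, ← happly]; exact TE.le_opNorm _
    have he1 : ‖ι e‖ ^ 2 = 1 := by rw [hnormsq]; simp [he]
    have := hnormsq w
    nlinarith [norm_nonneg (ι w), norm_nonneg (ι e), norm_nonneg TE, hC,
      sq_nonneg (‖TE‖ * ‖ι e‖)]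
  -- bound v ⬝ᵥ v ≤ K^2 * (w ⬝ᵥ w)
  have hvbound : v ⬝ᵥ v ≤ K ^ 2 * (w ⬝ᵥ w) := by
    rw [dotProduct, dotProduct, Finset.mul_sum]
    apply Finset.sum_le_sum
    intro k _
    show (lam k * w k) * (lam k * w k) ≤ K ^ 2 * (w k * w k)
    have : lam k * lam k ≤ K ^ 2 := by nlinarith [hK k, abs_nonneg (lam k), sq_abs (lam k)]
    nlinarith [sq_nonneg (w k), sq_nonneg (lam k * w k)]
  -- bound v ⬝ᵥ E v ≤ √C * (v ⬝ᵥ v)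
  have hEv : v ⬝ᵥ ((Ψᵀ * Ψ - 1) *ᵥ v) ≤ Real.sqrt C * (v ⬝ᵥ v) := by
    have h1 : (inner ℝ (ι v) (TE (ι v)) : ℝ) ≤ ‖ι v‖ * ‖TE (ι v)‖ := real_inner_le_norm _ _
    have h2 : ‖TE (ι v)‖ ≤ ‖TE‖ * ‖ι v‖ := TE.le_opNorm _
    have h3 : (inner ℝ (ι v) (TE (ι v)) : ℝ) = v ⬝ᵥ ((Ψᵀ * Ψ - 1) *ᵥ v) := by
      rw [happly, hinner]
    have h4 := hnormsq v
    nlinarith [norm_nonneg (ι v), hnormE]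
  have hvnn : 0 ≤ v ⬝ᵥ v := by
    rw [← hnormsq]; positivity
  have hwnn : 0 ≤ w ⬝ᵥ w := by
    rw [← hnormsq]; positivity
  nlinarith [mul_le_mul_of_nonneg_left hvbound hsqrtnn,
    mul_le_mul_of_nonneg_left hwbound (mul_nonneg hsqrtnn (sq_nonneg K)),
    mul_le_mul_of_nonneg_left hwbound (sq_nonneg K)]
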